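/- Let A be a maximal arc in a projective plane P of order sk meeting every line in 0 or k points. Then the set of lines disjoint from A, viewed as a set of points of the dual plane, is a maximal {(sk−k+1)s, s}-arc in the dual plane: every point of P not in A lies on exactly s such lines, and every point of A lies on none. -/

import Mathlib

/-- The lines of a projective plane of order `s k` disjoint from a maximal arc
`A` (meeting every line in 0 or `k` points) form a maximal {(sk−k+1)s, s}-arc
in the dual plane: there are `(sk−k+1)s` such lines, every point of the plane
not in `A` lies on exactly `s` of them, and every point of `A` lies on none. -/
theorem dual_arc {α : Type*} [DecidableEq α]
    (X : Finset α) (L : Finset (Finset α)) (s k : ℕ) (hk : 1 ≤ k)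
    (hX : X.card = (s * k) ^ 2 + s * k + 1)
    (hlines : ∀ l ∈ L, l ⊆ X ∧ l.card = s * k + 1)
    (hpair : ∀ x ∈ X, ∀ y ∈ X, x ≠ y →
      (L.filter (fun l => x ∈ l ∧ y ∈ l)).card = 1)
    (A : Finset α) (hAX : A ⊆ X)
    (hAcard : A.card = (s * k - s + 1) * k)
    (harc : ∀ l ∈ L, (l ∩ A).card = 0 ∨ (l ∩ A).card = k) :
    ((L.filter (fun l => l ∩ A = ∅)).card = (s * k - k + 1) * s) ∧
      (∀ x ∈ X, x ∉ A →
        ((L.filter (fun l => l ∩ A = ∅)).filter (fun l => x ∈ l)).card = s) ∧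
      (∀ x ∈ A,
        ((L.filter (fun l => l ∩ A = ∅)).filter (fun l => x ∈ l)).card = 0) := by
  -- two distinct points lie on a unique line
  have hshare : ∀ l ∈ L, ∀ l' ∈ L, ∀ y z : α, y ∈ l → y ∈ l' → z ∈ l → z ∈ l' →
      y ≠ z → l = l' := by
    intro l hl l' hl' y z hyl hyl' hzl hzl' hyz
    by_contra hne
    have h1 := hpair y ((hlines l hl).1 hyl) z ((hlines l hl).1 hzl) hyz
    have hsub : ({l, l'} : Finset (Finset α)) ⊆ L.filter (fun m => y ∈ m ∧ z ∈ m) := by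
      intro m hm
      simp only [Finset.mem_insert, Finset.mem_singleton] at hm
      rcases hm with rfl | rfl <;> simp [Finset.mem_filter, *]
    have h2 := Finset.card_le_card hsub
    rw [Finset.card_insert_of_notMem (by simpa using hne), Finset.card_singleton, h1] at h2
    omega
  -- number of lines through a point
  have hthrough : ∀ x ∈ X, (L.filter (fun l => x ∈ l)).card * (s * k) = (s * k) ^ 2 + s * k := by
    intro x hx
    have hbi : (L.filter (fun l => x ∈ l)).biUnion (fun l => l.erase x) = X.erase x := by
      ext y
      simp only [Finset.mem_biUnion, Finset.mem_erase, Finset.mem_filter]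
      constructor
      · rintro ⟨l, ⟨hlL, hxl⟩, hyx, hyl⟩
        exact ⟨hyx, (hlines l hlL).1 hyl⟩
      · rintro ⟨hyx, hyX⟩
        have h1 := hpair x hx y hyX (Ne.symm hyx)
        have h2 : (L.filter (fun l => x ∈ l ∧ y ∈ l)).Nonempty := by
          rw [← Finset.card_pos, h1]; norm_num
        obtain ⟨l, hl⟩ := h2
        rw [Finset.mem_filter] at hl
        exact ⟨l, ⟨hl.1, hl.2.1⟩, hyx, hl.2.2⟩
    have hpd : ∀ l ∈ L.filter (fun l => x ∈ l), ∀ l' ∈ L.filter (fun l => x ∈ l),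
        l ≠ l' → Disjoint (l.erase x) (l'.erase x) := by
      intro l hl l' hl' hne
      rw [Finset.mem_filter] at hl hl'
      apply Finset.disjoint_left.mpr
      intro y hy hy'
      rw [Finset.mem_erase] at hy hy'
      exact hne (hshare l hl.1 l' hl'.1 y x hy.2 hy'.2 hl.2 hl'.2 hy.1)
    have hcard := Finset.card_biUnion hpd
    rw [hbi] at hcard
    rw [Finset.card_erase_of_mem hx, hX] at hcard
    have hsum : ∑ l ∈ L.filter (fun l => x ∈ l), (l.erase x).card
        = (L.filter (fun l => x ∈ l)).card * (s * k) := by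
      rw [Finset.sum_congr rfl (fun l hl => ?_), Finset.sum_const, smul_eq_mul]
      rw [Finset.mem_filter] at hl
      rw [Finset.card_erase_of_mem hl.2, (hlines l hl.1).2]
      omega
    rw [hsum] at hcard
    omega
  -- lines through x ∉ A meeting A
  have hmeets : ∀ x ∈ X, x ∉ A →
      (((L.filter (fun l => x ∈ l)).filter (fun l => l ∩ A ≠ ∅)).card) * k = A.card := by
    intro x hx hxA
    have hbi : (L.filter (fun l => x ∈ l)).biUnion (fun l => l ∩ A) = A := by
      ext a
      simp only [Finset.mem_biUnion, Finset.mem_inter, Finset.mem_filter]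
      constructor
      · rintro ⟨l, _, _, ha⟩; exact ha
      · intro ha
        have hax : x ≠ a := fun h => hxA (h ▸ ha)
        have h1 := hpair x hx a (hAX ha) hax
        have h2 : (L.filter (fun l => x ∈ l ∧ a ∈ l)).Nonempty := by
          rw [← Finset.card_pos, h1]; norm_num
        obtain ⟨l, hl⟩ := h2
        rw [Finset.mem_filter] at hl
        exact ⟨l, ⟨hl.1, hl.2.1⟩, hl.2.2, ha⟩
    have hpd : ∀ l ∈ L.filter (fun l => x ∈ l), ∀ l' ∈ L.filter (fun l => x ∈ l),
        l ≠ l' → Disjoint (l ∩ A) (l' ∩ A) := by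
      intro l hl l' hl' hne
      rw [Finset.mem_filter] at hl hl'
      apply Finset.disjoint_left.mpr
      intro y hy hy'
      rw [Finset.mem_inter] at hy hy'
      have hyx : y ≠ x := fun h => hxA (h ▸ hy.2)
      exact hne (hshare l hl.1 l' hl'.1 y x hy.1 hy'.1 hl.2 hl'.2 hyx)
    have hcard := Finset.card_biUnion hpd
    rw [hbi] at hcard
    have hsplit := Finset.sum_filter_add_sum_filter_not (L.filter (fun l => x ∈ l))
      (fun l => l ∩ A ≠ ∅) (fun l => (l ∩ A).card)
    have hz : ∑ l ∈ (L.filter (fun l => x ∈ l)).filter (fun l => ¬ l ∩ A ≠ ∅),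
        (l ∩ A).card = 0 := by
      apply Finset.sum_eq_zero
      intro l hl
      rw [Finset.mem_filter] at hl
      have := hl.2
      simp only [not_not] at this
      rw [this]; simp
    have hv : ∑ l ∈ (L.filter (fun l => x ∈ l)).filter (fun l => l ∩ A ≠ ∅),
        (l ∩ A).card
        = ((L.filter (fun l => x ∈ l)).filter (fun l => l ∩ A ≠ ∅)).card * k := by
      rw [Finset.sum_congr rfl (fun l hl => ?_), Finset.sum_const, smul_eq_mul]
      rw [Finset.mem_filter, Finset.mem_filter] at hl
      rcases harc l hl.1.1 with h | h
      · exact absurd (Finset.card_eq_zero.mp h) hl.2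
      · exact h
    rw [hv, hz, add_zero] at hsplit
    exact hsplit.trans hcard.symm
  -- s ≥ 1 whenever some point is outside A
  have hspos : ∀ x ∈ X, x ∉ A → 1 ≤ s := by
    intro x hx hxA
    by_contra hs
    have hs0 : s = 0 := by omega
    subst hs0
    have hX1 : X.card = 1 := by simpa using hX
    have hA1 : A.card = k := by simpa using hAcard
    have hAle : A.card ≤ X.card := Finset.card_le_card hAX
    have hk1 : A.card = 1 := by omega
    have : A = X := Finset.eq_of_subset_of_card_le hAX (by omega)
    exact hxA (this ▸ hx)
  -- the degree statement
  have part2 : ∀ x ∈ X, x ∉ A →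
      ((L.filter (fun l => l ∩ A = ∅)).filter (fun l => x ∈ l)).card = s := by
    intro x hx hxA
    have hs := hspos x hx hxA
    have hfilt : (L.filter (fun l => l ∩ A = ∅)).filter (fun l => x ∈ l)
        = (L.filter (fun l => x ∈ l)).filter (fun l => ¬ l ∩ A ≠ ∅) := by
      simp only [Finset.filter_filter, not_not]
      exact Finset.filter_congr (fun l _ => by tauto)
    have h1 := hthrough x hx
    have h2 := hmeets x hx hxA
    rw [hAcard] at h2
    have h3 : ((L.filter (fun l => x ∈ l)).filter (fun l => l ∩ A ≠ ∅)).card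
        = s * k - s + 1 := Nat.eq_of_mul_eq_mul_right (by omega) h2
    have h4 : (L.filter (fun l => x ∈ l)).card = s * k + 1 := by
      have hn : 1 ≤ s * k := Nat.one_le_iff_ne_zero.mpr (by positivity)
      have : (L.filter (fun l => x ∈ l)).card * (s * k) = (s * k + 1) * (s * k) := by
        rw [h1]; ring
      exact Nat.eq_of_mul_eq_mul_right (by omega) this
    have h5 := Finset.card_filter_add_card_filter_not
      (s := L.filter (fun l => x ∈ l)) (p := fun l => l ∩ A ≠ ∅)
    rw [hfilt]
    have hsk : s ≤ s * k := Nat.le_mul_of_pos_right s (by omega)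
    omega
  refine ⟨?_, part2, ?_⟩
  · -- total count
    by_cases hs : s = 0
    · subst hs
      simp only [Nat.zero_mul, Nat.mul_zero]
      rw [Finset.card_eq_zero, Finset.filter_eq_empty_iff]
      intro l hl
      have hX1 : X.card = 1 := by simpa using hX
      have hl1 : l.card = 1 := by simpa using (hlines l hl).2
      have hlX : l = X := Finset.eq_of_subset_of_card_le (hlines l hl).1 (by omega)
      have hAl : A ⊆ l := hlX ▸ hAX
      have hA1 : A.Nonempty := by
        rw [← Finset.card_pos, hAcard]; simpa using (show 0 < k by omega)
      have : l ∩ A = A := Finset.inter_eq_right.mpr hAl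
      rw [this]
      exact Finset.nonempty_iff_ne_empty.mp hA1
    · have hs1 : 1 ≤ s := by omega
      -- double counting
      have hdc : ∑ x ∈ X \ A, ((L.filter (fun l => l ∩ A = ∅)).filter (fun l => x ∈ l)).card
          = ∑ l ∈ L.filter (fun l => l ∩ A = ∅), ((X \ A).filter (fun x => x ∈ l)).card := by
        simp only [Finset.card_filter]
        exact Finset.sum_comm
      have hL : ∑ x ∈ X \ A, ((L.filter (fun l => l ∩ A = ∅)).filter (fun l => x ∈ l)).card
          = (X \ A).card * s := by
        rw [Finset.sum_congr rfl (fun x hx => ?_), Finset.sum_const, smul_eq_mul]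
        rw [Finset.mem_sdiff] at hx
        exact part2 x hx.1 hx.2
      have hR : ∑ l ∈ L.filter (fun l => l ∩ A = ∅), ((X \ A).filter (fun x => x ∈ l)).card
          = (L.filter (fun l => l ∩ A = ∅)).card * (s * k + 1) := by
        rw [Finset.sum_congr rfl (fun l hl => ?_), Finset.sum_const, smul_eq_mul]
        rw [Finset.mem_filter] at hl
        have : (X \ A).filter (fun x => x ∈ l) = l := by
          ext y
          simp only [Finset.mem_filter, Finset.mem_sdiff]
          constructor
          · tauto
          · intro hy
            refine ⟨⟨(hlines l hl.1).1 hy, fun hyA => ?_⟩, hy⟩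
            have : y ∈ l ∩ A := Finset.mem_inter.mpr ⟨hy, hyA⟩
            rw [hl.2] at this
            exact absurd this (Finset.notMem_empty y)
        rw [this, (hlines l hl.1).2]
      have hXA : (X \ A).card = X.card - A.card := Finset.card_sdiff_of_subset hAX
      have hle : A.card ≤ X.card := Finset.card_le_card hAX
      have harith : (X.card - A.card) * s = ((s * k - k + 1) * s) * (s * k + 1) := by
        rw [hX, hAcard] at *
        have c1 : s ≤ s * k := Nat.le_mul_of_pos_right s (by omega)
        have c2 : k ≤ s * k := Nat.le_mul_of_pos_left k (by omega)
        zify [c1, c2, hle]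
        ring
      have : (L.filter (fun l => l ∩ A = ∅)).card * (s * k + 1)
          = ((s * k - k + 1) * s) * (s * k + 1) := by
        rw [← hR, ← hdc, hL, hXA, harith]
      exact Nat.eq_of_mul_eq_mul_right (by omega) this
  · intro x hx
    rw [Finset.card_eq_zero, Finset.filter_eq_empty_iff]
    intro l hl
    rw [Finset.mem_filter] at hl
    intro hxl
    have : x ∈ l ∩ A := Finset.mem_inter.mpr ⟨hxl, hx⟩
    rw [hl.2] at this
    exact absurd this (Finset.notMem_empty x)
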